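/- arXiv:2506.16930 — 2 statements merged into one kernel-verified Lean document; each statement's English description precedes it below -/
import Mathlib

section
/- The bounded variation class is strictly contained in the weak average smoothness class: every f : [0,1] → ℝ with V(f) < ∞ satisfies ‖f‖_w < ∞, and there exists f : [0,1] → ℝ with ‖f‖_w < ∞ but V(f) = ∞. -/
open MeasureTheory Set ENNReal

/-- The local slope of `f` at `x`: `Λ_f(x) = sup_{x' ∈ [0,1], x' ≠ x} |f(x) − f(x')|/|x − x'|`,
valued in `[0,∞]`. -/
noncomputable def locSlope (f : ℝ → ℝ) (x : ℝ) : ℝ≥0∞ :=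
  ⨆ (x' : ℝ) (_ : x' ∈ Set.Icc (0:ℝ) 1) (_ : x' ≠ x),
    ENNReal.ofReal (|f x - f x'| / |x - x'|)

/-- Strong average smoothness: `‖f‖_s = ∫_{[0,1]} Λ_f(x) dx`. -/
noncomputable def strongNorm (f : ℝ → ℝ) : ℝ≥0∞ :=
  ∫⁻ x in Set.Icc (0:ℝ) 1, locSlope f x

/-- Weak average smoothness: `‖f‖_w = sup_{t>0} t·λ({x ∈ [0,1] : Λ_f(x) ≥ t})`. -/
noncomputable def weakNorm (f : ℝ → ℝ) : ℝ≥0∞ :=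
  ⨆ (t : ℝ) (_ : 0 < t),
    ENNReal.ofReal t * volume {x ∈ Set.Icc (0:ℝ) 1 | ENNReal.ofReal t ≤ locSlope f x}

/-- Total variation of `f` on `[0,1]`. -/
noncomputable def totalVar (f : ℝ → ℝ) : ℝ≥0∞ := eVariationOn f (Set.Icc 0 1)

lemma sum_edist_le {ι : Type*} (f : ℝ → ℝ) (p q : ι → ℝ) (s : Finset ι) :
    ∀ (b : ℝ), (∀ i ∈ s, 0 ≤ p i ∧ p i ≤ q i ∧ q i ≤ b) →
    (∀ i ∈ s, ∀ j ∈ s, i ≠ j → Disjoint (Icc (p i) (q i)) (Icc (p j) (q j))) →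
    ∑ i ∈ s, edist (f (p i)) (f (q i)) ≤ eVariationOn f (Icc 0 b) := by
  classical
  induction s using Finset.strongInduction with
  | _ s ih =>
    intro b hbd hdis
    rcases s.eq_empty_or_nonempty with rfl | hne
    · simp
    obtain ⟨i0, hi0, hmax⟩ := Finset.exists_max_image s p hne
    have hapi : 0 ≤ p i0 := (hbd i0 hi0).1
    have hpq : p i0 ≤ q i0 := (hbd i0 hi0).2.1
    have hqb : q i0 ≤ b := (hbd i0 hi0).2.2
    have herase : ∀ j ∈ s.erase i0, 0 ≤ p j ∧ p j ≤ q j ∧ q j ≤ p i0 := by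
      intro j hj
      have hjs := Finset.mem_of_mem_erase hj
      have hjne := Finset.ne_of_mem_erase hj
      refine ⟨(hbd j hjs).1, (hbd j hjs).2.1, ?_⟩
      by_contra hlt
      push_neg at hlt
      have hmem : p i0 ∈ Icc (p j) (q j) ∩ Icc (p i0) (q i0) :=
        ⟨⟨hmax j hjs, hlt.le⟩, le_refl _, hpq⟩
      exact Set.disjoint_left.mp (hdis j hjs i0 hi0 hjne) hmem.1 hmem.2
    have h1 := ih (s.erase i0) (Finset.erase_ssubset hi0) (p i0) herase
      (fun i hi j hj hij =>
        hdis i (Finset.mem_of_mem_erase hi) j (Finset.mem_of_mem_erase hj) hij)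
    have h2 : edist (f (p i0)) (f (q i0)) ≤ eVariationOn f (Icc (p i0) (q i0)) :=
      eVariationOn.edist_le f (left_mem_Icc.2 hpq) (right_mem_Icc.2 hpq)
    calc ∑ i ∈ s, edist (f (p i)) (f (q i))
        = ∑ i ∈ s.erase i0, edist (f (p i)) (f (q i)) + edist (f (p i0)) (f (q i0)) :=
          (Finset.sum_erase_add s _ hi0).symm
      _ ≤ eVariationOn f (Icc 0 (p i0)) + eVariationOn f (Icc (p i0) (q i0)) := add_le_add h1 h2
      _ = eVariationOn f (Icc 0 (q i0)) := by
          rw [← eVariationOn.union f (isGreatest_Icc hapi) (isLeast_Icc hpq),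
            Set.Icc_union_Icc_eq_Icc hapi hpq]
      _ ≤ eVariationOn f (Icc 0 b) := eVariationOn.mono f (Icc_subset_Icc le_rfl hqb)

noncomputable def Fex : ℝ → ℝ := fun x => x * Real.sin x⁻¹

lemma sin_lip (a b : ℝ) : |Real.sin a - Real.sin b| ≤ |a - b| := by
  rw [Real.sin_sub_sin, abs_mul, abs_mul, abs_two]
  calc 2 * |Real.sin ((a - b) / 2)| * |Real.cos ((a + b) / 2)|
      ≤ 2 * |(a - b) / 2| * 1 :=
        mul_le_mul (mul_le_mul_of_nonneg_left Real.abs_sin_le_abs (by norm_num))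
          (Real.abs_cos_le_one _) (abs_nonneg _) (by positivity)
    _ = |a - b| := by rw [abs_div, abs_two]; ring

lemma Fex_bound {a b : ℝ} (ha : 0 < a) (hab : a ≤ b) :
    |Fex b - Fex a| ≤ (1 + 1 / b) * (b - a) := by
  have hb : 0 < b := lt_of_lt_of_le ha hab
  have hsl : |Real.sin b⁻¹ - Real.sin a⁻¹| ≤ 1 / a - 1 / b := by
    refine (sin_lip _ _).trans (le_of_eq ?_)
    rw [abs_of_nonpos (sub_nonpos.2 (inv_anti₀ ha hab))]
    simp only [one_div]
    ring
  have key : Fex b - Fex a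
      = (b - a) * Real.sin b⁻¹ + a * (Real.sin b⁻¹ - Real.sin a⁻¹) := by
    simp only [Fex]; ring
  calc |Fex b - Fex a|
      ≤ |(b - a) * Real.sin b⁻¹| + |a * (Real.sin b⁻¹ - Real.sin a⁻¹)| := by
        rw [key]; exact abs_add_le _ _
    _ ≤ (b - a) * 1 + a * (1 / a - 1 / b) := by
        rw [abs_mul, abs_mul, abs_of_nonneg (sub_nonneg.2 hab), abs_of_pos ha]
        exact add_le_add
          (mul_le_mul_of_nonneg_left (Real.abs_sin_le_one _) (sub_nonneg.2 hab))
          (mul_le_mul_of_nonneg_left hsl ha.le)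
    _ = (1 + 1 / b) * (b - a) := by field_simp

lemma Fex_zero : Fex 0 = 0 := by simp [Fex]

lemma abs_Fex_le {x : ℝ} (hx : 0 ≤ x) : |Fex x| ≤ x := by
  rw [Fex, abs_mul, abs_of_nonneg hx]
  calc x * |Real.sin x⁻¹| ≤ x * 1 :=
        mul_le_mul_of_nonneg_left (Real.abs_sin_le_one _) hx
    _ = x := mul_one x

lemma locSlope_Fex_zero : locSlope Fex 0 ≤ ENNReal.ofReal 1 := by
  rw [locSlope]
  refine iSup_le fun y => iSup_le fun hy => iSup_le fun hne => ENNReal.ofReal_le_ofReal ?_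
  have hypos : 0 < y := lt_of_le_of_ne hy.1 (Ne.symm hne)
  rw [div_le_iff₀ (abs_pos.2 (sub_ne_zero.2 (Ne.symm hne)))]
  rw [Fex_zero, zero_sub, abs_neg, zero_sub, abs_neg, abs_of_pos hypos, one_mul]
  exact abs_Fex_le hy.1

lemma locSlope_Fex_le {x : ℝ} (hx1 : 0 < x) (hx2 : x ≤ 1) :
    locSlope Fex x ≤ ENNReal.ofReal (1 + 1 / x) := by
  rw [locSlope]
  refine iSup_le fun y => iSup_le fun hy => iSup_le fun hne => ENNReal.ofReal_le_ofReal ?_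
  have hxy : (0:ℝ) < |x - y| := abs_pos.2 (sub_ne_zero.2 (Ne.symm hne))
  rw [div_le_iff₀ hxy]
  rcases eq_or_lt_of_le hy.1 with hy0 | hypos
  · -- y = 0
    rw [← hy0, Fex_zero, sub_zero, sub_zero, abs_of_pos hx1]
    calc |Fex x| ≤ x := abs_Fex_le hx1.le
      _ ≤ (1 + 1 / x) * x := by
        refine le_mul_of_one_le_left hx1.le ?_
        have : 0 < 1 / x := by positivity
        linarith
  · rcases lt_or_gt_of_ne hne with hlt | hgt
    · -- y < x
      have h := Fex_bound hypos hlt.le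
      rw [abs_of_pos (sub_pos.2 hlt)]
      calc |Fex x - Fex y| ≤ (1 + 1 / x) * (x - y) := h
        _ = (1 + 1 / x) * (x - y) := rfl
    · -- x < y
      have h := Fex_bound hx1 hgt.le
      rw [abs_sub_comm, abs_of_neg (sub_neg.2 hgt), neg_sub]
      calc |Fex y - Fex x| ≤ (1 + 1 / y) * (y - x) := h
        _ ≤ (1 + 1 / x) * (y - x) := by
          have hyx : 1 / y ≤ 1 / x := one_div_le_one_div_of_le hx1 hgt.le
          have : (0:ℝ) ≤ y - x := sub_nonneg.2 hgt.le
          nlinarith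

lemma weakNorm_Fex : weakNorm Fex ≤ 2 := by
  rw [weakNorm]
  refine iSup_le fun t => iSup_le fun ht => ?_
  rcases le_or_gt t 2 with h2 | h2
  · calc ENNReal.ofReal t * volume {x ∈ Icc (0:ℝ) 1 | ENNReal.ofReal t ≤ locSlope Fex x}
        ≤ ENNReal.ofReal 2 * volume (Icc (0:ℝ) 1) :=
          mul_le_mul' (ENNReal.ofReal_le_ofReal h2) (measure_mono (sep_subset _ _))
      _ = 2 := by
        rw [Real.volume_Icc]
        rw [ENNReal.ofReal_ofNat]
        norm_num
  · have hsub : {x ∈ Icc (0:ℝ) 1 | ENNReal.ofReal t ≤ locSlope Fex x} ⊆ Icc (0:ℝ) (2 / t) := by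
      rintro x ⟨hx, hslope⟩
      rcases eq_or_lt_of_le hx.1 with hx0 | hxpos
      · exfalso
        have h1 : ENNReal.ofReal t ≤ ENNReal.ofReal 1 := by
          rw [← hx0] at hslope
          exact hslope.trans locSlope_Fex_zero
        have := (ENNReal.ofReal_le_ofReal_iff (by norm_num)).1 h1
        linarith
      · refine ⟨hx.1, ?_⟩
        have h1 := hslope.trans (locSlope_Fex_le hxpos hx.2)
        have ht' : t ≤ 1 + 1 / x := (ENNReal.ofReal_le_ofReal_iff (by positivity)).1 h1
        rw [le_div_iff₀ (by linarith : (0:ℝ) < t)]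
        have hx1 : x ≤ 1 := hx.2
        have : t * x ≤ (1 + 1 / x) * x := mul_le_mul_of_nonneg_right ht' hxpos.le
        have hxx : (1 + 1 / x) * x = x + 1 := by field_simp
        nlinarith
    calc ENNReal.ofReal t * volume {x ∈ Icc (0:ℝ) 1 | ENNReal.ofReal t ≤ locSlope Fex x}
        ≤ ENNReal.ofReal t * volume (Icc (0:ℝ) (2 / t)) :=
          mul_le_mul_right (measure_mono hsub) _
      _ ≤ 2 := by
        rw [Real.volume_Icc, ← ENNReal.ofReal_mul (by linarith : (0:ℝ) ≤ t)]
        rw [show t * (2 / t - 0) = 2 by field_simp; ring]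
        rw [ENNReal.ofReal_ofNat]

open Filter in
lemma totalVar_Fex : totalVar Fex = ⊤ := by
  have hπ : 0 < Real.pi := Real.pi_pos
  set a : ℕ → ℝ := fun k => (((k : ℝ) + 1 / 2) * Real.pi)⁻¹ with ha
  have hapos : ∀ k, 0 < a k := by
    intro k
    have : (0:ℝ) < ((k : ℝ) + 1 / 2) * Real.pi := by positivity
    exact inv_pos.2 this
  have hamono : ∀ {k m : ℕ}, k ≤ m → a m ≤ a k := by
    intro k m h
    refine inv_anti₀ (by positivity) ?_
    have : (k:ℝ) ≤ (m:ℝ) := Nat.cast_le.2 h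
    nlinarith
  have ha1 : ∀ k, a k ≤ 1 := by
    intro k
    refine le_trans (hamono (Nat.zero_le k)) ?_
    rw [ha]
    have h2 : (1:ℝ) ≤ ((0:ℕ):ℝ) + 1/2 * Real.pi := by
      have := Real.pi_gt_three
      norm_num
      linarith
    rw [inv_le_one_iff₀]
    right
    push_cast
    nlinarith [Real.pi_gt_three]
  have hFa : ∀ k : ℕ, Fex (a k) = a k * (-1 : ℝ) ^ k := by
    intro k
    have hinv : (a k)⁻¹ = ((k : ℝ) + 1 / 2) * Real.pi := by rw [ha, inv_inv]
    show a k * Real.sin (a k)⁻¹ = a k * (-1 : ℝ) ^ k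
    rw [hinv]
    congr 1
    have he : ((k : ℝ) + 1 / 2) * Real.pi = Real.pi / 2 + (k : ℝ) * Real.pi := by ring
    rw [he, Real.sin_add_nat_mul_pi, Real.sin_pi_div_two, mul_one]
  have hstep : ∀ k : ℕ, edist (Fex (a k)) (Fex (a (k + 1))) = ENNReal.ofReal (a (k + 1) + a k) := by
    intro k
    rw [edist_dist, Real.dist_eq, hFa, hFa]
    congr 1
    have e1 : a k * (-1:ℝ) ^ k - a (k + 1) * (-1:ℝ) ^ (k + 1)
        = (-1:ℝ) ^ k * (a (k + 1) + a k) := by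
      rw [pow_succ]; ring
    rw [e1, abs_mul, abs_pow, abs_neg, abs_one, one_pow, one_mul,
      abs_of_pos (by positivity)]
  have hN : ∀ N : ℕ,
      ENNReal.ofReal ((1 / Real.pi) * ∑ i ∈ Finset.range N, (1 / ((i : ℝ) + 1))) ≤ totalVar Fex := by
    intro N
    set u : ℕ → ℝ := fun i => a (N - i) with hu
    have humono : Monotone u := fun i j hij => hamono (Nat.sub_le_sub_left hij N)
    have hus : ∀ i, u i ∈ Icc (0:ℝ) 1 := fun i => ⟨(hapos _).le, ha1 _⟩
    have hterm : ∀ i ∈ Finset.range N,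
        ENNReal.ofReal (a (N - 1 - i)) ≤ edist (Fex (u (i + 1))) (Fex (u i)) := by
      intro i hi
      rw [Finset.mem_range] at hi
      have e2 : u (i + 1) = a (N - 1 - i) := by
        show a (N - (i + 1)) = a (N - 1 - i)
        congr 1; omega
      have e3 : u i = a (N - 1 - i + 1) := by
        show a (N - i) = a (N - 1 - i + 1)
        congr 1; omega
      rw [e2, e3, hstep]
      exact ENNReal.ofReal_le_ofReal (le_add_of_nonneg_left (hapos _).le)
    calc ENNReal.ofReal ((1 / Real.pi) * ∑ i ∈ Finset.range N, (1 / ((i : ℝ) + 1)))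
        = ENNReal.ofReal (∑ i ∈ Finset.range N, (1 / Real.pi) * (1 / ((i : ℝ) + 1))) := by
          rw [Finset.mul_sum]
      _ ≤ ENNReal.ofReal (∑ i ∈ Finset.range N, a i) := by
          refine ENNReal.ofReal_le_ofReal (Finset.sum_le_sum fun i _ => ?_)
          have hle : ((i:ℝ) + 1/2) * Real.pi ≤ Real.pi * ((i:ℝ) + 1) := by nlinarith
          calc (1 / Real.pi) * (1 / ((i : ℝ) + 1)) = (Real.pi * ((i:ℝ) + 1))⁻¹ := by
                rw [one_div, one_div, ← mul_inv]
            _ ≤ a i := inv_anti₀ (by positivity) hle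
      _ = ENNReal.ofReal (∑ i ∈ Finset.range N, a (N - 1 - i)) := by
          rw [Finset.sum_range_reflect]
      _ = ∑ i ∈ Finset.range N, ENNReal.ofReal (a (N - 1 - i)) :=
          ENNReal.ofReal_sum_of_nonneg fun i _ => (hapos _).le
      _ ≤ ∑ i ∈ Finset.range N, edist (Fex (u (i + 1))) (Fex (u i)) :=
          Finset.sum_le_sum hterm
      _ ≤ eVariationOn Fex (Icc 0 1) := eVariationOn.sum_le (f := Fex) (n := N) humono hus
  by_contra hne
  have htend : Tendsto (fun N : ℕ => (1 / Real.pi) * ∑ i ∈ Finset.range N, (1 / ((i : ℝ) + 1)))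
      atTop atTop := by
    have h0 : (0:ℝ) < 1 / Real.pi := by positivity
    exact (Real.tendsto_sum_range_one_div_nat_succ_atTop).const_mul_atTop h0
  obtain ⟨N, hNge⟩ := (htend.eventually_ge_atTop ((totalVar Fex).toReal + 1)).exists
  have hle := hN N
  rw [ENNReal.ofReal_le_iff_le_toReal hne] at hle
  linarith

lemma part1 (f : ℝ → ℝ) (hf : totalVar f < ⊤) : weakNorm f < ⊤ := by
  have key : ∀ t : ℝ, 0 < t →
      ENNReal.ofReal t * volume {x ∈ Icc (0:ℝ) 1 | ENNReal.ofReal t ≤ locSlope f x}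
        ≤ 20 * totalVar f := by
    intro t ht
    set E := {x ∈ Icc (0:ℝ) 1 | ENNReal.ofReal t ≤ locSlope f x} with hE
    have hw : ∀ x ∈ E, ∃ y, (y ∈ Icc (0:ℝ) 1 ∧ y ≠ x) ∧ t / 2 * |x - y| < |f x - f y| := by
      intro x hx
      have h1 : ENNReal.ofReal (t/2) < locSlope f x :=
        lt_of_lt_of_le ((ENNReal.ofReal_lt_ofReal_iff ht).2 (by linarith)) hx.2
      rw [locSlope] at h1
      rw [lt_iSup_iff] at h1
      obtain ⟨y, hy⟩ := h1
      rw [lt_iSup_iff] at hy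
      obtain ⟨hy1, hy2⟩ := hy
      rw [lt_iSup_iff] at hy2
      obtain ⟨hy3, hy4⟩ := hy2
      refine ⟨y, ⟨hy1, hy3⟩, ?_⟩
      have hratio : t/2 < |f x - f y| / |x - y| := by
        by_contra hle
        push_neg at hle
        exact absurd (ENNReal.ofReal_le_ofReal hle) (not_le.2 hy4)
      have hxy : 0 < |x - y| := abs_pos.2 (sub_ne_zero.2 (Ne.symm hy3))
      calc t / 2 * |x - y| < |f x - f y| / |x - y| * |x - y| := by
            exact mul_lt_mul_of_pos_right hratio hxy
        _ = |f x - f y| := div_mul_cancel₀ _ hxy.ne'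
    choose! w hw1 hw3 using hw
    set r : ℝ → ℝ := fun x => |x - w x| with hr
    have hrpos : ∀ x ∈ E, 0 < r x := by
      intro x hx
      exact abs_pos.2 (sub_ne_zero.2 (Ne.symm (hw1 x hx).2))
    have hR : ∀ x ∈ E, r x ≤ 1 := by
      intro x hx
      have h1 : x ∈ Icc (0:ℝ) 1 := hx.1
      have h2 : w x ∈ Icc (0:ℝ) 1 := (hw1 x hx).1
      rw [hr]
      rw [abs_le]
      constructor <;> [linarith [h1.1, h2.2]; linarith [h1.2, h2.1]]
    obtain ⟨u, huE, hdisj, hcov⟩ :=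
      Vitali.exists_disjoint_subfamily_covering_enlargement_closedBall E (fun a => a) r 1 hR 4
        (by norm_num)
    have hu_cnt : u.Countable := by
      refine Set.PairwiseDisjoint.countable_of_isOpen
        (hdisj.mono (fun i => Metric.ball_subset_closedBall)) (fun i _ => Metric.isOpen_ball)
        (fun i hi => Metric.nonempty_ball.2 (hrpos i (huE hi)))
    have hEsub : E ⊆ ⋃ b ∈ u, Metric.closedBall b (4 * r b) := by
      intro x hx
      obtain ⟨b, hb, hsub⟩ := hcov x hx
      exact mem_biUnion hb (hsub (Metric.mem_closedBall_self (hrpos x hx).le))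
    have hm : volume E ≤ ∑' b : u, ENNReal.ofReal (8 * r b) := by
      refine (measure_mono hEsub).trans ?_
      refine (measure_biUnion_le volume hu_cnt _).trans ?_
      refine ENNReal.tsum_le_tsum fun b => ?_
      rw [Real.volume_closedBall]
      exact ENNReal.ofReal_le_ofReal (by ring_nf; exact le_rfl)
    have hIccSub : ∀ x ∈ E, Icc (min x (w x)) (max x (w x)) ⊆ Metric.closedBall x (r x) := by
      intro x hx z hz
      rw [mem_Icc] at hz
      rw [Metric.mem_closedBall, Real.dist_eq, abs_le]
      rcases le_total x (w x) with h | h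
      · rw [min_eq_left h, max_eq_right h] at hz
        have hrx : r x = w x - x := by
          have h0 : r x = |x - w x| := rfl
          rw [h0, abs_sub_comm]; exact abs_of_nonneg (by linarith)
        constructor <;> linarith
      · rw [min_eq_right h, max_eq_left h] at hz
        have hrx : r x = x - w x := by
          have h0 : r x = |x - w x| := rfl
          rw [h0]; exact abs_of_nonneg (by linarith)
        constructor <;> linarith
    have hsum : ∀ s : Finset u, ∑ b ∈ s, edist (f b) (f (w b)) ≤ totalVar f := by
      intro s
      have happ := sum_edist_le f (fun b : u => min (b : ℝ) (w b)) (fun b : u => max (b : ℝ) (w b))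
        s 1 ?_ ?_
      · refine le_trans (le_of_eq ?_) happ
        refine Finset.sum_congr rfl fun b _ => ?_
        rcases le_total (b : ℝ) (w b) with h | h
        · rw [min_eq_left h, max_eq_right h]
        · rw [min_eq_right h, max_eq_left h, edist_comm]
      · intro i _
        have hiE : (i : ℝ) ∈ E := huE i.2
        have h1 : (i : ℝ) ∈ Icc (0:ℝ) 1 := hiE.1
        have h2 : w i ∈ Icc (0:ℝ) 1 := (hw1 i hiE).1
        refine ⟨le_min h1.1 h2.1, min_le_max, max_le h1.2 h2.2⟩
      · intro i _ j _ hij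
        have hne : (i : ℝ) ≠ (j : ℝ) := fun hc => hij (Subtype.coe_injective hc)
        exact Disjoint.mono (hIccSub i (huE i.2)) (hIccSub j (huE j.2)) (hdisj i.2 j.2 hne)
    have hsum' : ∑' b : u, edist (f b) (f (w b)) ≤ totalVar f := by
      rw [ENNReal.tsum_eq_iSup_sum]; exact iSup_le hsum
    calc ENNReal.ofReal t * volume E
        ≤ ENNReal.ofReal t * ∑' b : u, ENNReal.ofReal (8 * r b) := mul_le_mul_right hm _
      _ = ∑' b : u, ENNReal.ofReal t * ENNReal.ofReal (8 * r b) := ENNReal.tsum_mul_left.symm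
      _ ≤ ∑' b : u, 20 * edist (f b) (f (w b)) := by
          refine ENNReal.tsum_le_tsum fun b => ?_
          have hbE : (b : ℝ) ∈ E := huE b.2
          have hlt := hw3 b hbE
          have hrb : 0 < r b := hrpos b hbE
          rw [← ENNReal.ofReal_mul ht.le, edist_dist, Real.dist_eq]
          have h20 : (20 : ℝ≥0∞) = ENNReal.ofReal 20 := by
            rw [ENNReal.ofReal_ofNat]
          rw [h20, ← ENNReal.ofReal_mul (by norm_num)]
          refine ENNReal.ofReal_le_ofReal ?_
          have : t / 2 * r b < |f b - f (w b)| := hlt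
          nlinarith [abs_nonneg (f b - f (w b))]
      _ = 20 * ∑' b : u, edist (f b) (f (w b)) := ENNReal.tsum_mul_left
      _ ≤ 20 * totalVar f := mul_le_mul_right hsum' _
  have hle : weakNorm f ≤ 20 * totalVar f := by
    rw [weakNorm]
    exact iSup₂_le key
  exact lt_of_le_of_lt hle (ENNReal.mul_lt_top (by norm_num) hf)

/-- The BV class is strictly contained in the weak average smoothness class. -/
theorem BV_strictly_in_weak_class :
    (∀ f : ℝ → ℝ, totalVar f < ⊤ → weakNorm f < ⊤) ∧
    (∃ f : ℝ → ℝ, weakNorm f < ⊤ ∧ totalVar f = ⊤) := by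
  refine ⟨part1, Fex, lt_of_le_of_lt weakNorm_Fex ?_, totalVar_Fex⟩
  exact ENNReal.ofNat_lt_top
end

section
/- For every f : [0,1] → ℝ and every partition 0 ≤ x_1 < x_2 < ⋯ < x_n ≤ 1, one has ∫_{[0,1]} Λ_f(x) dx ≥ Σ_{i=1}^{n−1} |f(x_{i+1}) − f(x_i)|. -/
open MeasureTheory Set ENNReal

lemma le_locSlope (f : ℝ → ℝ) {y x' : ℝ} (h1 : x' ∈ Set.Icc (0:ℝ) 1) (h2 : x' ≠ y) :
    ENNReal.ofReal (|f y - f x'| / |y - x'|) ≤ locSlope f y := by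
  unfold locSlope
  exact le_iSup_of_le x' (le_iSup_of_le h1 (le_iSup_of_le h2 le_rfl))

lemma locSlope_ge (f : ℝ → ℝ) {a b y : ℝ} (ha : a ∈ Set.Icc (0:ℝ) 1)
    (hb : b ∈ Set.Icc (0:ℝ) 1) (hy : y ∈ Set.Ioo a b) :
    ENNReal.ofReal (|f b - f a| / (b - a)) ≤ locSlope f y := by
  obtain ⟨hay, hyb⟩ := hy
  have hab : a < b := hay.trans hyb
  set L : ℝ := |f b - f a| / (b - a) with hL
  by_cases h : L ≤ |f y - f a| / (y - a)
  · refine le_trans ?_ (le_locSlope f ha hay.ne)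
    rw [abs_of_pos (by linarith : (0:ℝ) < y - a)]
    exact ENNReal.ofReal_le_ofReal h
  · push_neg at h
    have h2 : L ≤ |f y - f b| / (b - y) := by
      by_contra h2
      push_neg at h2
      have e1 : |f y - f a| < L * (y - a) := by
        rw [div_lt_iff₀ (by linarith)] at h; linarith
      have e2 : |f y - f b| < L * (b - y) := by
        rw [div_lt_iff₀ (by linarith)] at h2; linarith
      have e3 : |f b - f a| ≤ |f y - f a| + |f y - f b| := by
        have := abs_sub (f b - f y) (f a - f y)
        calc |f b - f a| = |(f b - f y) - (f a - f y)| := by ring_nf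
          _ ≤ |f b - f y| + |f a - f y| := abs_sub _ _
          _ = |f y - f a| + |f y - f b| := by rw [abs_sub_comm (f b), abs_sub_comm (f a)]; ring
      have e4 : L * (b - a) = |f b - f a| := by
        rw [hL, div_mul_cancel₀ _ (by linarith : b - a ≠ 0)]
      nlinarith
    refine le_trans ?_ (le_locSlope f hb hyb.ne')
    rw [abs_sub_comm y b, abs_of_pos (by linarith : (0:ℝ) < b - y)]
    exact ENNReal.ofReal_le_ofReal h2

/-- For every `f : [0,1] → ℝ` and every partition `0 ≤ x_1 < ⋯ < x_n ≤ 1`,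
`∫_{[0,1]} Λ_f ≥ Σ_i |f(x_{i+1}) − f(x_i)|`. -/
theorem strong_ge_partition_variation (f : ℝ → ℝ) (n : ℕ) (x : Fin (n + 1) → ℝ)
    (hx : StrictMono x) (hmem : ∀ i, x i ∈ Set.Icc (0:ℝ) 1) :
    ENNReal.ofReal (∑ i : Fin n, |f (x i.succ) - f (x i.castSucc)|) ≤ strongNorm f := by
  set s : Fin n → Set ℝ := fun i => Set.Ioo (x i.castSucc) (x i.succ) with hs
  have hdisj' : ∀ i j : Fin n, i < j → Disjoint (s i) (s j) := by
    intro i j h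
    rw [Set.disjoint_left]
    rintro y ⟨_, hy2⟩ ⟨hy3, _⟩
    have : x i.succ ≤ x j.castSucc := hx.monotone (Fin.succ_le_castSucc_iff.mpr h)
    linarith
  have hdisj : Pairwise (Function.onFun Disjoint s) := by
    intro i j hij
    rcases hij.lt_or_gt with h | h
    · exact hdisj' i j h
    · exact (hdisj' j i h).symm
  have hmeas : ∀ i, MeasurableSet (s i) := fun i => measurableSet_Ioo
  have hsub : (⋃ i, s i) ⊆ Set.Icc (0:ℝ) 1 := by
    rintro y hy
    simp only [Set.mem_iUnion, hs] at hy
    obtain ⟨i, hy1, hy2⟩ := hy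
    exact ⟨(hmem i.castSucc).1.trans hy1.le, hy2.le.trans (hmem i.succ).2⟩
  have key : ∀ i : Fin n, ENNReal.ofReal (|f (x i.succ) - f (x i.castSucc)|)
      ≤ ∫⁻ y in s i, locSlope f y := by
    intro i
    have hlt : x i.castSucc < x i.succ := hx (Fin.castSucc_lt_succ (i := i))
    calc ENNReal.ofReal (|f (x i.succ) - f (x i.castSucc)|)
        = ENNReal.ofReal (|f (x i.succ) - f (x i.castSucc)| / (x i.succ - x i.castSucc))
            * volume (s i) := by
          rw [hs, Real.volume_Ioo, ← ENNReal.ofReal_mul (div_nonneg (abs_nonneg _) (by linarith)),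
            div_mul_cancel₀ _ (by linarith : x i.succ - x i.castSucc ≠ 0)]
      _ = ∫⁻ _ in s i, ENNReal.ofReal (|f (x i.succ) - f (x i.castSucc)| / (x i.succ - x i.castSucc)) := (setLIntegral_const _ _).symm
      _ ≤ ∫⁻ y in s i, locSlope f y := by
          refine setLIntegral_mono' (hmeas i) fun y hy => ?_
          exact locSlope_ge f (hmem _) (hmem _) hy
  calc ENNReal.ofReal (∑ i : Fin n, |f (x i.succ) - f (x i.castSucc)|)
      = ∑ i : Fin n, ENNReal.ofReal (|f (x i.succ) - f (x i.castSucc)|) :=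
        ENNReal.ofReal_sum_of_nonneg fun i _ => abs_nonneg _
    _ ≤ ∑ i : Fin n, ∫⁻ y in s i, locSlope f y := Finset.sum_le_sum fun i _ => key i
    _ = ∑' i : Fin n, ∫⁻ y in s i, locSlope f y := (tsum_fintype _).symm
    _ = ∫⁻ y, locSlope f y ∂(Measure.sum fun i => volume.restrict (s i)) :=
        (lintegral_sum_measure _ _).symm
    _ = ∫⁻ y in ⋃ i, s i, locSlope f y := by rw [Measure.restrict_iUnion hdisj hmeas]
    _ ≤ strongNorm f := lintegral_mono' (Measure.restrict_mono hsub le_rfl) le_rfl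
end
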